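/- Let X ⊆ ℝⁿ be a compact convex set, let f : ℝⁿ → ℝ be differentiable and m-strongly convex on X with m > 0, and let x* be the minimizer of f over X. Let S ⊆ X be a finite nonempty set and suppose S is a proper support of x, i.e., x = Σ_{s ∈ S} λ_s s with λ_s > 0 for every s ∈ S and Σ_{s ∈ S} λ_s = 1. Then the strong Wolfe gap w(x, S) equals 0 if and only if x = x*. -/

import Mathlib

open Set
open scoped RealInnerProductSpace BigOperators

/-- For `f` `m`-strongly convex on a compact convex set `X` with
minimizer `xs`, and `S ⊆ X` a finite nonempty proper support of `x` (i.e. `x` is a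
convex combination of the points of `S` with strictly positive weights), the strong
Wolfe gap `w(x, S)` is zero if and only if `x = xs`. -/
theorem strong_wolfe_gap_eq_zero_iff
    {n : ℕ} (X : Set (EuclideanSpace ℝ (Fin n)))
    (hXcompact : IsCompact X) (hXconvex : Convex ℝ X)
    (m : ℝ) (hm : 0 < m)
    (f : EuclideanSpace ℝ (Fin n) → ℝ) (f' : EuclideanSpace ℝ (Fin n) → EuclideanSpace ℝ (Fin n))
    (hgrad : ∀ x, HasGradientAt f (f' x) x)
    (hstrconv : ∀ x ∈ X, ∀ y ∈ X,
      f x + ⟪f' x, y - x⟫ + (m / 2) * ‖y - x‖ ^ 2 ≤ f y)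
    (xs : EuclideanSpace ℝ (Fin n)) (hxsX : xs ∈ X) (hxsmin : ∀ y ∈ X, f xs ≤ f y)
    (S : Set (EuclideanSpace ℝ (Fin n))) (hSX : S ⊆ X)
    (hSfin : S.Finite) (hSne : S.Nonempty)
    (x : EuclideanSpace ℝ (Fin n))
    (lam : EuclideanSpace ℝ (Fin n) → ℝ)
    (hlam_pos : ∀ s ∈ S, 0 < lam s)
    (hlam_sum : ∑ s ∈ hSfin.toFinset, lam s = 1)
    (hlam_comb : x = ∑ s ∈ hSfin.toFinset, lam s • s) :
    sSup ((fun y => ⟪f' x, y⟫) '' S) - sInf ((fun z => ⟪f' x, z⟫) '' X) = 0 ↔ x = xs := by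
  classical
  set g := f' x with hg
  have hxX : x ∈ X := by
    rw [hlam_comb]
    exact hXconvex.sum_mem (fun s hs => (hlam_pos s (hSfin.mem_toFinset.mp hs)).le) hlam_sum
      (fun s hs => hSX (hSfin.mem_toFinset.mp hs))
  have hcont : Continuous fun y : EuclideanSpace ℝ (Fin n) => ⟪g, y⟫ :=
    continuous_const.inner continuous_id
  set A := (fun y => ⟪g, y⟫) '' S with hA
  set B := (fun z => ⟪g, z⟫) '' X with hB
  have hAfin : A.Finite := hSfin.image _
  have hAne : A.Nonempty := hSne.image _
  have hBcomp : IsCompact B := hXcompact.image hcont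
  have hBne : B.Nonempty := ⟨_, ⟨x, hxX, rfl⟩⟩
  have hAbdd : BddAbove A := hAfin.bddAbove
  have hBbdd : BddBelow B := hBcomp.bddBelow
  have hle1 : ∀ s ∈ S, ⟪g, s⟫ ≤ sSup A := fun s hs => le_csSup hAbdd ⟨s, hs, rfl⟩
  have hle2 : ∀ z ∈ X, sInf B ≤ ⟪g, z⟫ := fun z hz => csInf_le hBbdd ⟨z, hz, rfl⟩
  have hxsum : ⟪g, x⟫ = ∑ s ∈ hSfin.toFinset, lam s * ⟪g, s⟫ := by
    conv_lhs => rw [hlam_comb]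
    rw [inner_sum]
    exact Finset.sum_congr rfl fun s _ => real_inner_smul_right g s (lam s)
  constructor
  · intro h
    have hM : sSup A = sInf B := by linarith
    have hxle : ∀ z ∈ X, ⟪g, x⟫ ≤ ⟪g, z⟫ := by
      intro z hz
      have h1 : ⟪g, x⟫ ≤ sSup A := by
        rw [hxsum]
        calc ∑ s ∈ hSfin.toFinset, lam s * ⟪g, s⟫
            ≤ ∑ s ∈ hSfin.toFinset, lam s * sSup A := by
              refine Finset.sum_le_sum fun s hs => ?_
              exact mul_le_mul_of_nonneg_left (hle1 s (hSfin.mem_toFinset.mp hs))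
                (hlam_pos s (hSfin.mem_toFinset.mp hs)).le
          _ = sSup A := by rw [← Finset.sum_mul, hlam_sum, one_mul]
      calc ⟪g, x⟫ ≤ sSup A := h1
        _ = sInf B := hM
        _ ≤ ⟪g, z⟫ := hle2 z hz
    have key := hstrconv x hxX xs hxsX
    have h1 : 0 ≤ ⟪g, xs - x⟫ := by
      rw [inner_sub_right]
      linarith [hxle xs hxsX]
    have hfx : f xs ≤ f x := hxsmin x hxX
    have hnorm : ‖xs - x‖ ^ 2 ≤ 0 := by nlinarith
    have : xs - x = 0 := by
      have := sq_nonneg ‖xs - x‖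
      have h0 : ‖xs - x‖ ^ 2 = 0 := le_antisymm hnorm this
      have := pow_eq_zero_iff (n := 2) (by norm_num) |>.mp h0
      exact norm_eq_zero.mp this
    have := sub_eq_zero.mp this
    exact this.symm
  · intro h
    subst h
    -- first-order optimality at x (= xs)
    have hfo : ∀ z ∈ X, 0 ≤ ⟪g, z - x⟫ := by
      intro z hz
      have hmin : IsLocalMinOn f X x :=
        eventually_mem_nhdsWithin.mono fun y hy => hxsmin y hy
      have hfd : HasFDerivWithinAt f (InnerProductSpace.toDual ℝ _ g) X x :=
        ((hgrad x).hasFDerivAt).hasFDerivWithinAt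
      have hcone : z - x ∈ posTangentConeAt X x :=
        sub_mem_posTangentConeAt_of_segment_subset (hXconvex.segment_subset hxX hz)
      have := hmin.hasFDerivWithinAt_nonneg hfd hcone
      simpa [InnerProductSpace.toDual_apply_apply] using this
    have hge : ∀ s ∈ S, ⟪g, x⟫ ≤ ⟪g, s⟫ := by
      intro s hs
      have := hfo s (hSX hs)
      rw [inner_sub_right] at this
      linarith
    have heq : ∀ s ∈ hSfin.toFinset, lam s * ⟪g, x⟫ = lam s * ⟪g, s⟫ := by
      rw [← Finset.sum_eq_sum_iff_of_le]
      · rw [← Finset.sum_mul, hlam_sum, one_mul, ← hxsum]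
      · intro s hs
        exact mul_le_mul_of_nonneg_left (hge s (hSfin.mem_toFinset.mp hs))
          (hlam_pos s (hSfin.mem_toFinset.mp hs)).le
    have heq' : ∀ s ∈ S, ⟪g, s⟫ = ⟪g, x⟫ := by
      intro s hs
      have := heq s (hSfin.mem_toFinset.mpr hs)
      have hl := hlam_pos s hs
      rw [mul_eq_mul_left_iff] at this
      rcases this with h' | h'
      · exact h'.symm
      · exact absurd h' hl.ne'
    obtain ⟨a, s0, hs0, ha⟩ : ∃ a s0, s0 ∈ S ∧ ⟪g, s0⟫ = a ∧ sSup A = a := by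
      have := hAne.csSup_mem hAfin
      obtain ⟨s0, hs0, hv⟩ := this
      exact ⟨sSup A, s0, hs0, hv, rfl⟩
    obtain ⟨z0, hz0, hz0v⟩ : ∃ z0 ∈ X, ⟪g, z0⟫ = sInf B := hBcomp.sInf_mem hBne
    have h1 : sSup A = ⟪g, x⟫ := by rw [ha.2, ← ha.1, heq' s0 hs0]
    have h2 : ⟪g, x⟫ ≤ sInf B := by
      rw [← hz0v]
      have := hfo z0 hz0
      rw [inner_sub_right] at this
      linarith
    have h3 : sInf B ≤ sSup A := by
      calc sInf B ≤ ⟪g, s0⟫ := hle2 s0 (hSX hs0)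
        _ ≤ sSup A := hle1 s0 hs0
    linarith
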